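/- Let a₁,…,a_L be points on the unit circle 𝕋 ⊆ ℂ and let k be an integer. Then there exist real numbers θ₁ ≤ θ₂ ≤ ⋯ ≤ θ_L ≤ θ₁ + 1 such that the sum θ₁ + ⋯ + θ_L lies in the half-open interval [k, k+1), and such that the unordered L-tuple (a₁,…,a_L) equals the unordered L-tuple (e^{2πiθ₁},…,e^{2πiθ_L}). -/

import Mathlib

private lemma exp_two_pi_add_int (x : ℝ) (m : ℤ) :
    Complex.exp (2 * Real.pi * Complex.I * ((x + m : ℝ) : ℂ)) =
      Complex.exp (2 * Real.pi * Complex.I * (x : ℂ)) := by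
  push_cast
  rw [mul_add, Complex.exp_add]
  have h : (2 * (Real.pi : ℂ) * Complex.I * m) = m * (2 * Real.pi * Complex.I) := by ring
  rw [h, Complex.exp_int_mul_two_pi_mul_I, mul_one]

/-- any tuple of points on the unit circle admits an ordered
lift `θ₁ ≤ ⋯ ≤ θ_L ≤ θ₁ + 1` with `∑ θ_j ∈ [k, k+1)`. -/
theorem stmt_1 (L : ℕ) (hL : 0 < L) (a : Fin L → ℂ)
    (ha : ∀ j, ‖a j‖ = 1) (k : ℤ) :
    ∃ θ : Fin L → ℝ, Monotone θ ∧ (∀ j, θ j ≤ θ ⟨0, hL⟩ + 1) ∧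
      (∑ j, θ j) ∈ Set.Ico (k : ℝ) ((k : ℝ) + 1) ∧
      ∃ σ : Equiv.Perm (Fin L), ∀ j,
        a j = Complex.exp (2 * Real.pi * Complex.I * (θ (σ j) : ℂ)) := by
  haveI : NeZero L := ⟨hL.ne'⟩
  have hπ : (0:ℝ) < 2 * Real.pi := by positivity
  set φ : Fin L → ℝ := fun j => (a j).arg / (2 * Real.pi) with hφdef
  -- basic bounds on φ
  have hφub : ∀ j, φ j ≤ 1/2 := by
    intro j
    rw [hφdef]
    dsimp only
    rw [div_le_iff₀ hπ]
    have := Complex.arg_le_pi (a j)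
    linarith
  have hφlb : ∀ j, -(1/2) ≤ φ j := by
    intro j
    rw [hφdef]
    dsimp only
    rw [le_div_iff₀ hπ]
    have := Complex.neg_pi_lt_arg (a j)
    linarith
  have hφbound : ∀ i j, φ i ≤ φ j + 1 := fun i j => by
    have := hφub i; have := hφlb j; linarith
  have haφ : ∀ j, a j = Complex.exp (2 * Real.pi * Complex.I * (φ j : ℂ)) := by
    intro j
    have h := Complex.norm_mul_exp_arg_mul_I (a j)
    rw [ha j, Complex.ofReal_one, one_mul] at h
    rw [← h]
    congr 1
    rw [hφdef]
    dsimp only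
    push_cast
    have h2π : ((2:ℂ) * Real.pi) ≠ 0 := by
      simp [Real.pi_ne_zero]
    field_simp
  -- sort φ
  set s : Equiv.Perm (Fin L) := Tuple.sort φ with hs
  set g : Fin L → ℝ := φ ∘ s with hg
  have hgmono : Monotone g := Tuple.monotone_sort φ
  have hgbound : ∀ i j, g i ≤ g j + 1 := fun i j => hφbound _ _
  set S : ℝ := ∑ i, g i with hS
  -- the integer shift
  set n : ℤ := k - ⌊S⌋ with hn
  set q : ℤ := n / L with hq
  have hL' : (0:ℤ) < L := by exact_mod_cast hL
  have hr0 : 0 ≤ n % L := Int.emod_nonneg n hL'.ne'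
  have hrL : n % L < L := Int.emod_lt_of_pos n hL'
  set r : ℕ := (n % L).toNat with hr
  have hrval : (r : ℤ) = n % L := Int.toNat_of_nonneg hr0
  have hrLnat : r < L := by
    have : (r : ℤ) < L := by rw [hrval]; exact hrL
    exact_mod_cast this
  set c : Fin L := ⟨r, hrLnat⟩ with hc
  -- define θ
  set θ : Fin L → ℝ := fun j => g (j + c) + q + (if L ≤ (j : ℕ) + r then 1 else 0) with hθ
  -- index computation
  have hidx : ∀ j : Fin L, ((j + c : Fin L) : ℕ) = ((j : ℕ) + r) % L := by
    intro j; rw [Fin.val_add]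
  have hidx_lt : ∀ j : Fin L, (j : ℕ) + r < L → ((j + c : Fin L) : ℕ) = (j : ℕ) + r := by
    intro j h; rw [hidx j, Nat.mod_eq_of_lt h]
  have hidx_ge : ∀ j : Fin L, L ≤ (j : ℕ) + r → ((j + c : Fin L) : ℕ) = (j : ℕ) + r - L := by
    intro j h
    rw [hidx j, Nat.mod_eq_sub_mod h, Nat.mod_eq_of_lt]
    omega
  refine ⟨θ, ?_, ?_, ?_, ?_⟩
  · -- Monotone
    intro i j hij
    have hij' : (i : ℕ) ≤ (j : ℕ) := hij
    rw [hθ]; dsimp only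
    by_cases hi : L ≤ (i : ℕ) + r
    · have hj : L ≤ (j : ℕ) + r := le_trans hi (by omega)
      rw [if_pos hi, if_pos hj]
      have : (i + c : Fin L) ≤ (j + c : Fin L) := by
        rw [Fin.le_def, hidx_ge i hi, hidx_ge j hj]; omega
      have := hgmono this
      linarith
    · push_neg at hi
      by_cases hj : L ≤ (j : ℕ) + r
      · rw [if_neg (by omega), if_pos hj]
        have := hgbound (i + c) (j + c)
        linarith
      · push_neg at hj
        rw [if_neg (by omega), if_neg (by omega)]
        have : (i + c : Fin L) ≤ (j + c : Fin L) := by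
          rw [Fin.le_def, hidx_lt i hi, hidx_lt j hj]; omega
        have := hgmono this
        linarith
  · -- θ j ≤ θ 0 + 1
    intro j
    have h0 : ((⟨0, hL⟩ : Fin L) : ℕ) = 0 := rfl
    have h0r : ¬ L ≤ ((⟨0, hL⟩ : Fin L) : ℕ) + r := by rw [h0]; omega
    rw [hθ]; dsimp only
    rw [if_neg h0r]
    by_cases hj : L ≤ (j : ℕ) + r
    · rw [if_pos hj]
      have hle : (j + c : Fin L) ≤ ((⟨0, hL⟩ : Fin L) + c) := by
        rw [Fin.le_def, hidx_ge j hj, hidx_lt ⟨0, hL⟩ (by rw [h0]; omega), h0]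
        omega
      have := hgmono hle
      linarith
    · rw [if_neg hj]
      have := hgbound (j + c) ((⟨0, hL⟩ : Fin L) + c)
      linarith
  · -- sum
    have hsum1 : ∑ j, g (j + c) = S := by
      rw [hS]
      exact Equiv.sum_comp (Equiv.addRight c) g
    have hsum2 : ∑ j : Fin L, (if L ≤ (j : ℕ) + r then (1:ℝ) else 0) = r := by
      rw [Fin.sum_univ_eq_sum_range (fun m => if L ≤ m + r then (1:ℝ) else 0)]
      rw [Finset.sum_boole]
      have hfil : (Finset.range L).filter (fun m => L ≤ m + r) = Finset.Ico (L - r) L := by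
        ext m
        simp [Finset.mem_filter, Finset.mem_range, Finset.mem_Ico]
        omega
      rw [hfil, Nat.card_Ico]
      norm_cast
      omega
    have hsum : ∑ j, θ j = S + L * q + r := by
      rw [hθ]
      dsimp only
      rw [Finset.sum_add_distrib, Finset.sum_add_distrib, hsum1, hsum2,
        Finset.sum_const, Finset.card_univ, Fintype.card_fin]
      push_cast
      ring
    have hdm : (L : ℤ) * q + r = n := by
      rw [hrval, hq]
      exact Int.mul_ediv_add_emod n L
    have hdm' : (L : ℝ) * (q : ℝ) + (r : ℝ) = (n : ℝ) := by exact_mod_cast hdm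
    rw [hsum]
    have hfl : (⌊S⌋ : ℝ) ≤ S := Int.floor_le S
    have hfl2 : S < ⌊S⌋ + 1 := Int.lt_floor_add_one S
    have hnval : (n : ℝ) = k - ⌊S⌋ := by rw [hn]; push_cast; ring
    constructor
    · rw [add_assoc, hdm', hnval]; linarith
    · rw [add_assoc, hdm', hnval]; linarith
  · -- permutation
    refine ⟨s.symm.trans (Equiv.addRight c).symm, fun j => ?_⟩
    have hσ : ((Equiv.addRight c).symm (s.symm j) + c : Fin L) = s.symm j := by
      have := (Equiv.addRight c).apply_symm_apply (s.symm j)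
      simpa [Equiv.addRight] using this
    have hgval : g ((Equiv.addRight c).symm (s.symm j) + c) = φ j := by
      rw [hσ, hg]
      simp
    rw [haφ j]
    rw [hθ]
    dsimp only [Equiv.trans_apply]
    rw [hgval]
    by_cases hcond : L ≤ (((Equiv.addRight c).symm (s.symm j) : Fin L) : ℕ) + r
    · rw [if_pos hcond]
      have : φ j + (q : ℝ) + 1 = φ j + ((q + 1 : ℤ) : ℝ) := by push_cast; ring
      rw [this, exp_two_pi_add_int (φ j) (q + 1)]
    · rw [if_neg hcond, add_zero]
      rw [exp_two_pi_add_int (φ j) q]
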